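/- Quantum Holism theorem (part–whole incompatibility): let Γ be an invertible complex d×d matrix, and let P, Q be orthogonal projectors on ℂ^d with at least one of P, Q nontrivial (different from 0 and from the identity). If the product projector P ⊗ Q commutes with the whole-system property vec(Γ)·vec(Γ)ᴴ, then P·Γ·Qᵀ = 0, i.e., (P ⊗ Q)·vec(Γ) = 0, so the two properties are mutually exclusive. In particular, no nontrivial property of the parts P ⊗ Q can leave vec(Γ) invariant: the property vec(Γ)·vec(Γ)ᴴ of the whole is incompatible with every nontrivial property of the parts except mutually exclusive ones. -/

import Mathlib

open Matrix
open scoped Kronecker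

/-- Vectorization of a matrix: `vec C (i,j) = C i j`. -/
def vec {m n : ℕ} (C : Matrix (Fin m) (Fin n) ℂ) : Fin m × Fin n → ℂ :=
  fun p => C p.1 p.2

lemma vec_inj {m n : ℕ} {A B : Matrix (Fin m) (Fin n) ℂ} (h : _root_.vec A = _root_.vec B) : A = B := by
  ext i j; exact congrFun h (i, j)

lemma vec_zero {m n : ℕ} : _root_.vec (0 : Matrix (Fin m) (Fin n) ℂ) = 0 := by
  funext p; rfl

lemma kron_mulVec {d : ℕ} (A B C : Matrix (Fin d) (Fin d) ℂ) :
    (A ⊗ₖ B) *ᵥ _root_.vec C = _root_.vec (A * C * Bᵀ) := by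
  ext ⟨i, j⟩
  simp only [_root_.vec, Matrix.mulVec, dotProduct, Matrix.mul_apply, kroneckerMap_apply,
    transpose_apply, Fintype.sum_prod_type, Finset.sum_mul]
  rw [Finset.sum_comm]
  congr 1; ext k; congr 1; ext l; ring

lemma vecMulVec_mulVec' {n : Type*} [Fintype n] (w v x : n → ℂ) :
    vecMulVec w v *ᵥ x = (v ⬝ᵥ x) • w := by
  ext i
  simp [vecMulVec_apply, Matrix.mulVec, dotProduct, Finset.mul_sum, mul_comm, mul_left_comm]

/-- Quantum Holism theorem (part–whole incompatibility): for invertible `Γ` and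
orthogonal projectors `P`, `Q` with at least one of them nontrivial, if `P ⊗ Q`
commutes with `vec(Γ)·vec(Γ)ᴴ`, then `P·Γ·Qᵀ = 0`, i.e. `(P ⊗ Q)·vec(Γ) = 0`:
the two properties are mutually exclusive. -/
theorem quantum_holism (d : ℕ) (P Q Γ : Matrix (Fin d) (Fin d) ℂ)
    (hP1 : Pᴴ = P) (hP2 : P * P = P) (hQ1 : Qᴴ = Q) (hQ2 : Q * Q = Q)
    (hΓ : IsUnit Γ)
    (hnontriv : (P ≠ 0 ∧ P ≠ 1) ∨ (Q ≠ 0 ∧ Q ≠ 1))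
    (hcomm : Commute (P ⊗ₖ Q) (vecMulVec (_root_.vec Γ) (star (_root_.vec Γ)))) :
    P * Γ * Qᵀ = 0 ∧ (P ⊗ₖ Q) *ᵥ _root_.vec Γ = 0 := by
  set v := _root_.vec Γ with hv
  set R := P ⊗ₖ Q with hR
  have hΓ0 : Γ ≠ 0 := by
    rintro rfl
    rcases hnontriv with ⟨h1, h2⟩ | ⟨h1, h2⟩
    all_goals {
      have hone : (1 : Matrix (Fin d) (Fin d) ℂ) = 0 := by
        obtain ⟨u, hu⟩ := hΓ
        calc (1 : Matrix (Fin d) (Fin d) ℂ) = ↑u * ↑u⁻¹ := (u.mul_inv).symm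
          _ = 0 := by rw [hu]; simp
      have hall : ∀ M : Matrix (Fin d) (Fin d) ℂ, M = 0 := fun M => by
        calc M = M * 1 := (Matrix.mul_one M).symm
          _ = M * 0 := by rw [hone]
          _ = 0 := Matrix.mul_zero M
      exact h1 (hall _) }
  have hv0 : v ≠ 0 := by
    intro h
    exact hΓ0 (vec_inj (B := 0) (by rw [← hv, h, vec_zero]))
  have hn : star v ⬝ᵥ v ≠ 0 := by
    intro h
    apply hv0
    ext i
    have hsum : ∑ j, (Complex.normSq (v j) : ℂ) = 0 := by
      rw [← h]; simp [dotProduct, mul_comm, Complex.normSq_eq_conj_mul_self]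
    have hreal : ∑ j, Complex.normSq (v j) = 0 := by exact_mod_cast hsum
    have := (Finset.sum_eq_zero_iff_of_nonneg
      (fun j _ => Complex.normSq_nonneg (v j))).mp hreal i (Finset.mem_univ i)
    simpa using Complex.normSq_eq_zero.mp this
  have hRR : R * R = R := by
    rw [hR, ← Matrix.mul_kronecker_mul, hP2, hQ2]
  have key : (star v ⬝ᵥ v) • (R *ᵥ v) = (star v ⬝ᵥ (R *ᵥ v)) • v := by
    have h1 := congrArg (fun M => M *ᵥ v) hcomm.eq
    simp only [← Matrix.mulVec_mulVec] at h1
    rw [vecMulVec_mulVec', vecMulVec_mulVec'] at h1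
    simpa [Matrix.mulVec_smul] using h1
  set c := star v ⬝ᵥ (R *ᵥ v) with hc
  set n := star v ⬝ᵥ v with hnn
  have hRv : R *ᵥ v = (c / n) • v := by
    have := congrArg (fun x => n⁻¹ • x) key
    simpa [smul_smul, inv_mul_cancel₀ hn, div_eq_mul_inv, mul_comm] using this
  set μ := c / n with hμ
  have hμ2 : μ * μ = μ := by
    have h1 : R *ᵥ (R *ᵥ v) = R *ᵥ v := by rw [Matrix.mulVec_mulVec, hRR]
    rw [hRv, Matrix.mulVec_smul, hRv, smul_smul] at h1
    have := sub_eq_zero.mpr h1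
    rw [← sub_smul] at this
    rcases smul_eq_zero.mp this with h | h
    · linear_combination h
    · exact absurd h hv0
  have hsplit : μ = 0 ∨ μ = 1 := by
    rcases mul_eq_zero.mp (show μ * (μ - 1) = 0 by linear_combination hμ2) with h | h
    · exact Or.inl h
    · exact Or.inr (by linear_combination h)
  rcases hsplit with h0 | h1
  · have hRv0 : R *ᵥ v = 0 := by rw [hRv, h0, zero_smul]
    refine ⟨?_, hRv0⟩
    apply vec_inj (B := 0)
    rw [vec_zero, ← kron_mulVec, ← hR, ← hv, hRv0]
  · exfalso
    have hRv1 : R *ᵥ v = v := by rw [hRv, h1, one_smul]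
    have heq : P * Γ * Qᵀ = Γ := by
      apply _root_.vec_inj
      rw [← kron_mulVec, ← hR, ← hv, hRv1]
    obtain ⟨u, hu⟩ := hΓ
    have hPX : P * (Γ * Qᵀ * (↑u⁻¹ : Matrix (Fin d) (Fin d) ℂ)) = 1 := by
      rw [← Matrix.mul_assoc, ← Matrix.mul_assoc, heq, ← hu]
      exact u.mul_inv
    have hPone : P = 1 := by
      have h := congrArg (fun M => P * M) hPX
      simp only [Matrix.mul_one] at h
      rw [← Matrix.mul_assoc, hP2, hPX] at h
      exact h.symm
    have hYQ : ((↑u⁻¹ : Matrix (Fin d) (Fin d) ℂ) * (P * Γ)) * Qᵀ = 1 := by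
      rw [Matrix.mul_assoc, heq, ← hu]
      exact u.inv_mul
    have hQT2 : Qᵀ * Qᵀ = Qᵀ := by rw [← Matrix.transpose_mul, hQ2]
    have hQone : Q = 1 := by
      have h := congrArg (fun M => M * Qᵀ) hYQ
      simp only [Matrix.one_mul] at h
      rw [Matrix.mul_assoc, hQT2, hYQ] at h
      have hQT : Qᵀ = 1 := h.symm
      calc Q = Qᵀᵀ := (Matrix.transpose_transpose Q).symm
        _ = (1 : Matrix (Fin d) (Fin d) ℂ)ᵀ := by rw [hQT]
        _ = 1 := Matrix.transpose_one
    rcases hnontriv with ⟨_, h2⟩ | ⟨_, h2⟩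
    · exact h2 hPone
    · exact h2 hQone
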